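/- For I, J ≥ 4, any two I×J tables of nonnegative integers with equal strictly positive row sums and equal strictly positive column sums, both vanishing on all diagonal cells (i,i) for i ≤ min(I,J), are connected by a sequence of signed basic moves such that every intermediate table is entrywise nonnegative and vanishes on all diagonal cells. -/

import Mathlib

/-- The basic move at rows `i1 ≠ i2` and columns `j1 ≠ j2`. -/
def basicMove {I J : ℕ} (i1 i2 : Fin I) (j1 j2 : Fin J) : Fin I × Fin J → ℤ :=
  fun p => (if p = (i1, j1) then 1 else 0) + (if p = (i2, j2) then 1 else 0)
    - (if p = (i1, j2) then 1 else 0) - (if p = (i2, j1) then 1 else 0)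

namespace ConnDiag

variable {I J : ℕ}

def TValid (f : Fin I × Fin J → ℤ) : Prop :=
  (∀ p, 0 ≤ f p) ∧ ∀ p : Fin I × Fin J, (p.1 : ℕ) = (p.2 : ℕ) → f p = 0

def MoveOK (m : Fin I × Fin J → ℤ) : Prop :=
  ∃ (i1 i2 : Fin I) (j1 j2 : Fin J), i1 ≠ i2 ∧ j1 ≠ j2 ∧
    (m = basicMove i1 i2 j1 j2 ∨ m = -basicMove i1 i2 j1 j2)

def TReach (f g : Fin I × Fin J → ℤ) : Prop :=
  ∃ L : List (Fin I × Fin J → ℤ), (∀ m ∈ L, MoveOK m) ∧ f + L.sum = g ∧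
    ∀ k : ℕ, ∀ p : Fin I × Fin J, 0 ≤ f p + (L.take k).sum p ∧
      ((p.1 : ℕ) = (p.2 : ℕ) → f p + (L.take k).sum p = 0)

lemma treach_refl {f : Fin I × Fin J → ℤ} (hf : TValid f) : TReach f f := by
  refine ⟨[], by simp, by simp, fun k p => ?_⟩
  simp only [List.take_nil, List.sum_nil, Pi.zero_apply, add_zero]
  exact ⟨hf.1 p, fun h => hf.2 p h⟩

lemma treach_trans {f g h : Fin I × Fin J → ℤ} (h1 : TReach f g) (h2 : TReach g h) :
    TReach f h := by
  obtain ⟨L1, m1, s1, c1⟩ := h1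
  obtain ⟨L2, m2, s2, c2⟩ := h2
  refine ⟨L1 ++ L2, ?_, ?_, ?_⟩
  · intro m hm; rcases List.mem_append.1 hm with h | h
    exacts [m1 m h, m2 m h]
  · rw [List.sum_append, ← add_assoc, s1, s2]
  · intro k p
    have hsplit : (((L1 ++ L2).take k).sum : Fin I × Fin J → ℤ)
        = (L1.take k).sum + (L2.take (k - L1.length)).sum := by
      rw [List.take_append, List.sum_append]
    rw [hsplit]
    by_cases hk : k ≤ L1.length
    · have h0 : k - L1.length = 0 := Nat.sub_eq_zero_of_le hk
      rw [h0]
      simpa using c1 k p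
    · have hL1 : L1.take k = L1 := List.take_of_length_le (le_of_lt (not_le.1 hk))
      have hgp : g p = f p + L1.sum p := by
        have := congrFun s1 p
        simpa using this.symm
      rw [hL1]
      have hc := c2 (k - L1.length) p
      constructor
      · have := hc.1; rw [hgp] at this
        simpa [add_assoc] using this
      · intro hd; have := hc.2 hd; rw [hgp] at this
        simpa [add_assoc] using this

lemma sum_map_neg (L : List (Fin I × Fin J → ℤ)) : (L.map (fun m => -m)).sum = -L.sum := by
  induction L with
  | nil => simp
  | cons a t ih => simp [ih]; abel

lemma treach_symm {f g : Fin I × Fin J → ℤ} (h : TReach f g) : TReach g f := by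
  obtain ⟨L, m1, s1, c1⟩ := h
  refine ⟨(L.map fun m => -m).reverse, ?_, ?_, ?_⟩
  · intro m hm
    rw [List.mem_reverse] at hm
    obtain ⟨m', hm', rfl⟩ := List.mem_map.1 hm
    obtain ⟨i1, i2, j1, j2, hii, hjj, hor⟩ := m1 m' hm'
    refine ⟨i1, i2, j1, j2, hii, hjj, ?_⟩
    rcases hor with h | h
    · right; rw [h]
    · left; rw [h, neg_neg]
  · rw [List.sum_reverse, sum_map_neg, ← s1]; abel
  · intro k p
    have hkey : (((L.map fun m => -m).reverse.take k).sum : Fin I × Fin J → ℤ)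
        = -L.sum + (L.take (L.length - k)).sum := by
      by_cases hk : k ≤ L.length
      · have hdrop : (L.map fun m => -m).reverse.drop k
            = ((L.map fun m => -m).take (L.length - k)).reverse := by
          have h0 := List.reverse_take (l := L.map fun m => -m) (i := L.length - k)
          have hlen' : (L.map fun m => -m).length = L.length := by simp
          rw [hlen', Nat.sub_sub_self hk] at h0
          exact h0.symm
        have hsum_split : (((L.map fun m => -m).reverse.take k).sum : Fin I × Fin J → ℤ)
            + ((L.map fun m => -m).reverse.drop k).sum = -L.sum := by
          rw [← List.sum_append, List.take_append_drop, List.sum_reverse, sum_map_neg]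
        rw [hdrop] at hsum_split
        have : (( ((L.map fun m => -m).take (L.length - k)).reverse).sum : Fin I × Fin J → ℤ)
            = -((L.take (L.length - k)).sum) := by
          rw [List.sum_reverse, ← List.map_take, sum_map_neg]
        rw [this] at hsum_split
        have := congrArg (fun x => x + (L.take (L.length - k)).sum) hsum_split
        simpa [add_assoc] using this
      · have hlen : (L.map fun m => -m).reverse.length ≤ k := by
          simpa using le_of_lt (not_le.1 hk)
        rw [List.take_of_length_le hlen, List.sum_reverse, sum_map_neg,
          Nat.sub_eq_zero_of_le (le_of_lt (not_le.1 hk))]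
        simp
    rw [hkey]
    have hgp : g p = f p + L.sum p := by
      have := congrFun s1 p; simpa using this.symm
    have hc := c1 (L.length - k) p
    constructor
    · have := hc.1
      simp only [Pi.add_apply, Pi.neg_apply, hgp]
      convert this using 1
      ring
    · intro hd
      have := hc.2 hd
      simp only [Pi.add_apply, Pi.neg_apply, hgp]
      rw [← this]; ring


lemma ne_of_fst {a a' : Fin I} {b b' : Fin J} (h : a ≠ a') : (a, b) ≠ (a', b') :=
  fun h' => h (congrArg Prod.fst h')

lemma ne_of_snd {a a' : Fin I} {b b' : Fin J} (h : b ≠ b') : (a, b) ≠ (a', b') :=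
  fun h' => h (congrArg Prod.snd h')

section bm
variable {a b : Fin I} {c d : Fin J}

lemma bm_11 (hab : a ≠ b) (hcd : c ≠ d) : basicMove a b c d (a, c) = 1 := by
  simp [basicMove, ne_of_fst hab, ne_of_snd hcd]

lemma bm_22 (hab : a ≠ b) (hcd : c ≠ d) : basicMove a b c d (b, d) = 1 := by
  simp [basicMove, ne_of_fst hab.symm, ne_of_snd hcd.symm, ne_of_fst hab]

lemma bm_12 (hab : a ≠ b) (hcd : c ≠ d) : basicMove a b c d (a, d) = -1 := by
  simp [basicMove, ne_of_fst hab, ne_of_snd hcd.symm]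

lemma bm_21 (hab : a ≠ b) (hcd : c ≠ d) : basicMove a b c d (b, c) = -1 := by
  simp [basicMove, ne_of_fst hab.symm, ne_of_snd hcd, ne_of_fst hab.symm]

lemma bm_0 (p : Fin I × Fin J) (h1 : p ≠ (a, c)) (h2 : p ≠ (b, d)) (h3 : p ≠ (a, d))
    (h4 : p ≠ (b, c)) : basicMove a b c d p = 0 := by
  simp [basicMove, h1, h2, h3, h4]

lemma bm_rowsum (i1 i2 : Fin I) (j1 j2 : Fin J) (i : Fin I) :
    ∑ j, basicMove i1 i2 j1 j2 (i, j) = 0 := by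
  simp only [basicMove, Prod.mk.injEq, ite_and]
  rw [Finset.sum_sub_distrib, Finset.sum_sub_distrib, Finset.sum_add_distrib]
  by_cases h1 : i = i1 <;> by_cases h2 : i = i2 <;>
    simp [h1, h2, Finset.sum_ite_eq']

lemma bm_colsum (i1 i2 : Fin I) (j1 j2 : Fin J) (j : Fin J) :
    ∑ i, basicMove i1 i2 j1 j2 (i, j) = 0 := by
  simp only [basicMove, Prod.mk.injEq, ite_and]
  rw [Finset.sum_sub_distrib, Finset.sum_sub_distrib, Finset.sum_add_distrib]
  by_cases h1 : j = j1 <;> by_cases h2 : j = j2 <;>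
    simp [h1, h2, Finset.sum_ite_eq']

end bm

lemma treach_single {f : Fin I × Fin J → ℤ} (hf : TValid f)
    (a b : Fin I) (c d : Fin J) (hab : a ≠ b) (hcd : c ≠ d)
    (hac : (a : ℕ) ≠ (c : ℕ)) (hbd : (b : ℕ) ≠ (d : ℕ))
    (had : 1 ≤ f (a, d)) (hbc : 1 ≤ f (b, c)) :
    TValid (f + basicMove a b c d) ∧ TReach f (f + basicMove a b c d) := by
  have hval : TValid (f + basicMove a b c d) := by
    constructor
    · intro p
      by_cases h1 : p = (a, c)
      · subst h1; simp only [Pi.add_apply, bm_11 hab hcd]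
        have := hf.1 (a, c); omega
      · by_cases h2 : p = (b, d)
        · subst h2; simp only [Pi.add_apply, bm_22 hab hcd]
          have := hf.1 (b, d); omega
        · by_cases h3 : p = (a, d)
          · subst h3; simp only [Pi.add_apply, bm_12 hab hcd]; omega
          · by_cases h4 : p = (b, c)
            · subst h4; simp only [Pi.add_apply, bm_21 hab hcd]; omega
            · simp only [Pi.add_apply, bm_0 p h1 h2 h3 h4, add_zero]
              exact hf.1 p
    · intro p hp
      have hzero : f p = 0 := hf.2 p hp
      have h1 : p ≠ (a, c) := by rintro rfl; exact hac hp
      have h2 : p ≠ (b, d) := by rintro rfl; exact hbd hp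
      have h3 : p ≠ (a, d) := by rintro rfl; omega
      have h4 : p ≠ (b, c) := by rintro rfl; omega
      simp only [Pi.add_apply, bm_0 p h1 h2 h3 h4, add_zero, hzero]
  refine ⟨hval, ⟨[basicMove a b c d], ?_, by simp, ?_⟩⟩
  · intro m hm
    simp only [List.mem_singleton] at hm
    exact ⟨a, b, c, d, hab, hcd, Or.inl hm⟩
  · intro k p
    cases k with
    | zero => simpa using ⟨hf.1 p, fun h => hf.2 p h⟩
    | succ k =>
      have : ([basicMove a b c d].take (k + 1)) = [basicMove a b c d] := by simp
      rw [this]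
      simp only [List.sum_cons, List.sum_nil, add_zero]
      exact ⟨hval.1 p, fun h => hval.2 p h⟩

lemma moves_rowsum {L : List (Fin I × Fin J → ℤ)} (hL : ∀ m ∈ L, MoveOK m) (i : Fin I) :
    ∑ j, L.sum (i, j) = 0 := by
  induction L with
  | nil => simp
  | cons a t ih =>
    have ha : ∑ j, a (i, j) = 0 := by
      obtain ⟨i1, i2, j1, j2, _, _, h | h⟩ := hL a (by simp) <;> subst h <;>
        simp [bm_rowsum, Finset.sum_neg_distrib]
    simp only [List.sum_cons, Pi.add_apply]
    rw [Finset.sum_add_distrib, ha, zero_add]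
    exact ih (fun m hm => hL m (by simp [hm]))

lemma moves_colsum {L : List (Fin I × Fin J → ℤ)} (hL : ∀ m ∈ L, MoveOK m) (j : Fin J) :
    ∑ i, L.sum (i, j) = 0 := by
  induction L with
  | nil => simp
  | cons a t ih =>
    have ha : ∑ i, a (i, j) = 0 := by
      obtain ⟨i1, i2, j1, j2, _, _, h | h⟩ := hL a (by simp) <;> subst h <;>
        simp [bm_colsum, Finset.sum_neg_distrib]
    simp only [List.sum_cons, Pi.add_apply]
    rw [Finset.sum_add_distrib, ha, zero_add]
    exact ih (fun m hm => hL m (by simp [hm]))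

lemma treach_rowsum {f g : Fin I × Fin J → ℤ} (h : TReach f g) (i : Fin I) :
    ∑ j, f (i, j) = ∑ j, g (i, j) := by
  obtain ⟨L, m1, s1, _⟩ := h
  have : ∀ j, g (i, j) = f (i, j) + L.sum (i, j) := by
    intro j; have := congrFun s1 (i, j); simpa using this.symm
  simp only [this]
  rw [Finset.sum_add_distrib, moves_rowsum m1, add_zero]

lemma treach_colsum {f g : Fin I × Fin J → ℤ} (h : TReach f g) (j : Fin J) :
    ∑ i, f (i, j) = ∑ i, g (i, j) := by
  obtain ⟨L, m1, s1, _⟩ := h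
  have : ∀ i, g (i, j) = f (i, j) + L.sum (i, j) := by
    intro i; have := congrFun s1 (i, j); simpa using this.symm
  simp only [this]
  rw [Finset.sum_add_distrib, moves_colsum m1, add_zero]

def tdist (f g : Fin I × Fin J → ℤ) : ℕ := ∑ p, (f p - g p).natAbs

lemma tdist_comm (f g : Fin I × Fin J → ℤ) : tdist f g = tdist g f :=
  Finset.sum_congr rfl fun p _ => by rw [← Int.natAbs_neg, neg_sub]

lemma tdist_eq_zero {f g : Fin I × Fin J → ℤ} (h : tdist f g = 0) : f = g := by
  funext p
  have := (Finset.sum_eq_zero_iff.1 h) p (Finset.mem_univ p)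
  have := Int.natAbs_eq_zero.1 this
  omega

lemma tdist_lt_core (f₂ f g : Fin I × Fin J → ℤ) (S : Finset (Fin I × Fin J))
    (hoff : ∀ p ∉ S, f₂ p = f p)
    (hS : ∑ p ∈ S, (f₂ p - g p).natAbs < ∑ p ∈ S, (f p - g p).natAbs) :
    tdist f₂ g < tdist f g := by
  unfold tdist
  rw [← Finset.sum_sdiff (Finset.subset_univ S), ← Finset.sum_sdiff (Finset.subset_univ S)]
  have hoff' : ∑ p ∈ Finset.univ \ S, (f₂ p - g p).natAbs
      = ∑ p ∈ Finset.univ \ S, (f p - g p).natAbs :=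
    Finset.sum_congr rfl fun p hp => by rw [hoff p (Finset.mem_sdiff.1 hp).2]
  rw [hoff']
  exact Nat.add_lt_add_left hS _

lemma sum4 (F : Fin I × Fin J → ℕ) (p1 p2 p3 p4 : Fin I × Fin J)
    (h12 : p1 ≠ p2) (h13 : p1 ≠ p3) (h14 : p1 ≠ p4) (h23 : p2 ≠ p3) (h24 : p2 ≠ p4)
    (h34 : p3 ≠ p4) :
    ∑ p ∈ ({p1, p2, p3, p4} : Finset (Fin I × Fin J)), F p = F p1 + F p2 + F p3 + F p4 := by
  rw [Finset.sum_insert (by simp [h12, h13, h14]), Finset.sum_insert (by simp [h23, h24]),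
    Finset.sum_pair h34]
  ring

lemma sum6 (F : Fin I × Fin J → ℕ) (p1 p2 p3 p4 p5 p6 : Fin I × Fin J)
    (h12 : p1 ≠ p2) (h13 : p1 ≠ p3) (h14 : p1 ≠ p4) (h15 : p1 ≠ p5) (h16 : p1 ≠ p6)
    (h23 : p2 ≠ p3) (h24 : p2 ≠ p4) (h25 : p2 ≠ p5) (h26 : p2 ≠ p6)
    (h34 : p3 ≠ p4) (h35 : p3 ≠ p5) (h36 : p3 ≠ p6)
    (h45 : p4 ≠ p5) (h46 : p4 ≠ p6) (h56 : p5 ≠ p6) :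
    ∑ p ∈ ({p1, p2, p3, p4, p5, p6} : Finset (Fin I × Fin J)), F p
      = F p1 + F p2 + F p3 + F p4 + F p5 + F p6 := by
  rw [Finset.sum_insert (by simp [h12, h13, h14, h15, h16]),
    Finset.sum_insert (by simp [h23, h24, h25, h26]),
    Finset.sum_insert (by simp [h34, h35, h36]),
    Finset.sum_insert (by simp [h45, h46]), Finset.sum_pair h56]
  ring

lemma ex_pos_of_sum_zero {K : Type*} [Fintype K] {z : K → ℤ} (h : ∑ k, z k = 0)
    {k0 : K} (hk : z k0 < 0) : ∃ k, 0 < z k := by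
  by_contra hc
  push_neg at hc
  have h1 : ∑ k, z k < ∑ k : K, (0 : ℤ) :=
    Finset.sum_lt_sum (fun i _ => hc i) ⟨k0, Finset.mem_univ k0, hk⟩
  simp [h] at h1

lemma ex_neg_of_sum_zero {K : Type*} [Fintype K] {z : K → ℤ} (h : ∑ k, z k = 0)
    {k0 : K} (hk : 0 < z k0) : ∃ k, z k < 0 := by
  by_contra hc
  push_neg at hc
  have h1 : ∑ k : K, (0 : ℤ) < ∑ k, z k :=
    Finset.sum_lt_sum (fun i _ => hc i) ⟨k0, Finset.mem_univ k0, hk⟩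
  simp [h] at h1

lemma ex_pos_of_sum_pos {K : Type*} [Fintype K] {z : K → ℤ} (h : 0 < ∑ k, z k) :
    ∃ k, 0 < z k := by
  by_contra hc
  push_neg at hc
  have h1 : ∑ k, z k ≤ 0 := Finset.sum_nonpos (fun i _ => hc i)
  omega


lemma nonneg_one_le {f g : Fin I × Fin J → ℤ} (hg : TValid g) {p : Fin I × Fin J}
    (h : 0 < f p - g p) : 1 ≤ f p := by have := hg.1 p; omega

lemma offdiag_of_pos {f g : Fin I × Fin J → ℤ} (hf : TValid f) (hg : TValid g)
    {p : Fin I × Fin J} (h : f p ≠ g p) : (p.1 : ℕ) ≠ (p.2 : ℕ) := by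
  intro hd
  have h1 := hf.2 p hd
  have h2 := hg.2 p hd
  omega

lemma stepE1 {f g : Fin I × Fin J → ℤ} (hf : TValid f) (hg : TValid g)
    (i r : Fin I) (e c : Fin J)
    (h1 : 0 < f (i, e) - g (i, e)) (h2 : f (i, c) - g (i, c) < 0)
    (h3 : 0 < f (r, c) - g (r, c)) (hre : (r : ℕ) ≠ (e : ℕ)) :
    ∃ f₂, TValid f₂ ∧ TReach f f₂ ∧ tdist f₂ g < tdist f g := by
  have hir : i ≠ r := by rintro rfl; omega
  have hec : e ≠ c := by rintro rfl; omega
  have hce : c ≠ e := hec.symm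
  have hic : (i : ℕ) ≠ (c : ℕ) := offdiag_of_pos hf hg (p := (i, c)) (by omega)
  have hfie : 1 ≤ f (i, e) := nonneg_one_le hg h1
  have hfrc : 1 ≤ f (r, c) := nonneg_one_le hg h3
  obtain ⟨hval, hreach⟩ := treach_single hf i r c e hir hce hic hre hfie hfrc
  refine ⟨f + basicMove i r c e, hval, hreach, ?_⟩
  apply tdist_lt_core _ _ _ ({(i, e), (i, c), (r, c), (r, e)} : Finset (Fin I × Fin J))
  · intro p hp
    simp only [Finset.mem_insert, Finset.mem_singleton] at hp
    push_neg at hp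
    obtain ⟨q1, q2, q3, q4⟩ := hp
    simp only [Pi.add_apply, bm_0 p q2 q4 q1 q3, add_zero]
  · rw [sum4 _ _ _ _ _ (ne_of_snd hec) (ne_of_fst hir) (ne_of_fst hir) (ne_of_fst hir)
      (ne_of_fst hir) (ne_of_snd hce),
      sum4 _ _ _ _ _ (ne_of_snd hec) (ne_of_fst hir) (ne_of_fst hir) (ne_of_fst hir)
      (ne_of_fst hir) (ne_of_snd hce)]
    simp only [Pi.add_apply, bm_12 hir hce, bm_11 hir hce, bm_21 hir hce, bm_22 hir hce]
    omega

lemma stepA {f g : Fin I × Fin J → ℤ} (hf : TValid f) (hg : TValid g)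
    (i1 i2 i3 : Fin I) (c1 c2 x : Fin J)
    (hi12 : i1 ≠ i2) (hi13 : i1 ≠ i3) (hi23 : i2 ≠ i3)
    (hc12 : c1 ≠ c2) (hxc1 : x ≠ c1) (hxc2 : x ≠ c2)
    (hz11 : 0 < f (i1, c1) - g (i1, c1)) (hz22 : 0 < f (i2, c2) - g (i2, c2))
    (hz12 : f (i1, c2) - g (i1, c2) < 0) (hz31 : f (i3, c1) - g (i3, c1) < 0)
    (hz2x : f (i2, x) = g (i2, x)) (hz3x : f (i3, x) = g (i3, x))
    (hxv1 : (x : ℕ) ≠ (i1 : ℕ)) (hxv2 : (x : ℕ) ≠ (i2 : ℕ))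
    (hf3x : 1 ≤ f (i3, x)) :
    ∃ f₂, TValid f₂ ∧ TReach f f₂ ∧ tdist f₂ g < tdist f g := by
  have hd31 : (i3 : ℕ) ≠ (c1 : ℕ) := offdiag_of_pos hf hg (p := (i3, c1)) (by omega)
  have hd12 : (i1 : ℕ) ≠ (c2 : ℕ) := offdiag_of_pos hf hg (p := (i1, c2)) (by omega)
  have hf11 : 1 ≤ f (i1, c1) := nonneg_one_le hg hz11
  have hf22 : 1 ≤ f (i2, c2) := nonneg_one_le hg hz22
  set M1 := basicMove i1 i3 x c1 with hM1
  set M2 := basicMove i1 i2 c2 x with hM2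
  obtain ⟨hval1, hr1⟩ := treach_single hf i1 i3 x c1 hi13 hxc1 (fun h => hxv1 h.symm) hd31
    hf11 hf3x
  -- evaluations of M1
  have m1_a : M1 (i1, c1) = -1 := bm_12 hi13 hxc1
  have m1_b : M1 (i3, c1) = 1 := bm_22 hi13 hxc1
  have m1_c : M1 (i1, x) = 1 := bm_11 hi13 hxc1
  have m1_d : M1 (i3, x) = -1 := bm_21 hi13 hxc1
  have m1_z12 : M1 (i1, c2) = 0 :=
    bm_0 _ (ne_of_snd hxc2.symm) (ne_of_fst hi13) (ne_of_snd hc12.symm) (ne_of_fst hi13)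
  have m1_z22 : M1 (i2, c2) = 0 :=
    bm_0 _ (ne_of_fst hi12.symm) (ne_of_fst hi23) (ne_of_fst hi12.symm) (ne_of_fst hi23)
  have m1_z2x : M1 (i2, x) = 0 :=
    bm_0 _ (ne_of_fst hi12.symm) (ne_of_fst hi23) (ne_of_fst hi12.symm) (ne_of_fst hi23)
  -- f1 values
  have hf1x : 1 ≤ (f + M1) (i1, x) := by
    simp only [Pi.add_apply, m1_c]; have := hf.1 (i1, x); omega
  have hf1_22 : 1 ≤ (f + M1) (i2, c2) := by
    simp only [Pi.add_apply, m1_z22]; omega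
  obtain ⟨hval2, hr2⟩ := treach_single hval1 i1 i2 c2 x hi12 hxc2.symm hd12
    (fun h => hxv2 h.symm) hf1x hf1_22
  -- evaluations of M2
  have m2_a : M2 (i1, c2) = 1 := bm_11 hi12 hxc2.symm
  have m2_b : M2 (i2, x) = 1 := bm_22 hi12 hxc2.symm
  have m2_c : M2 (i1, x) = -1 := bm_12 hi12 hxc2.symm
  have m2_d : M2 (i2, c2) = -1 := bm_21 hi12 hxc2.symm
  have m2_z11 : M2 (i1, c1) = 0 :=
    bm_0 _ (ne_of_snd hc12) (ne_of_fst hi12) (ne_of_snd hxc1.symm) (ne_of_fst hi12)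
  have m2_z31 : M2 (i3, c1) = 0 :=
    bm_0 _ (ne_of_fst hi13.symm) (ne_of_fst hi23.symm) (ne_of_fst hi13.symm)
      (ne_of_fst hi23.symm)
  have m2_z3x : M2 (i3, x) = 0 :=
    bm_0 _ (ne_of_fst hi13.symm) (ne_of_fst hi23.symm) (ne_of_fst hi13.symm)
      (ne_of_fst hi23.symm)
  refine ⟨f + M1 + M2, hval2, treach_trans hr1 hr2, ?_⟩
  apply tdist_lt_core _ _ _
    ({(i1, c1), (i1, c2), (i2, c2), (i2, x), (i3, c1), (i3, x)} : Finset (Fin I × Fin J))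
  · intro p hp
    simp only [Finset.mem_insert, Finset.mem_singleton] at hp
    push_neg at hp
    obtain ⟨q1, q2, q3, q4, q5, q6⟩ := hp
    by_cases hx : p = (i1, x)
    · subst hx
      simp only [Pi.add_apply, m1_c, m2_c]; ring
    · have e1 : M1 p = 0 := bm_0 p hx q5 q1 q6
      have e2 : M2 p = 0 := bm_0 p q2 q4 hx q3
      simp only [Pi.add_apply, e1, e2, add_zero]
  · rw [sum6 _ _ _ _ _ _ _ (ne_of_snd hc12) (ne_of_fst hi12) (ne_of_fst hi12)
      (ne_of_fst hi13) (ne_of_fst hi13) (ne_of_fst hi12) (ne_of_fst hi12) (ne_of_fst hi13)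
      (ne_of_fst hi13) (ne_of_snd hxc2.symm) (ne_of_fst hi23) (ne_of_fst hi23)
      (ne_of_fst hi23) (ne_of_fst hi23) (ne_of_snd hxc1.symm),
      sum6 _ _ _ _ _ _ _ (ne_of_snd hc12) (ne_of_fst hi12) (ne_of_fst hi12)
      (ne_of_fst hi13) (ne_of_fst hi13) (ne_of_fst hi12) (ne_of_fst hi12) (ne_of_fst hi13)
      (ne_of_fst hi13) (ne_of_snd hxc2.symm) (ne_of_fst hi23) (ne_of_fst hi23)
      (ne_of_fst hi23) (ne_of_fst hi23) (ne_of_snd hxc1.symm)]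
    simp only [Pi.add_apply, m1_a, m1_b, m1_c, m1_d, m1_z12, m1_z22, m1_z2x,
      m2_a, m2_b, m2_c, m2_d, m2_z11, m2_z31, m2_z3x]
    omega


lemma stepB {f g : Fin I × Fin J → ℤ} (hf : TValid f) (hg : TValid g)
    (i1 i3 y : Fin I) (c1 c2 c3 : Fin J)
    (hi13 : i1 ≠ i3) (hy1 : y ≠ i1) (hy3 : y ≠ i3)
    (hc12 : c1 ≠ c2) (hc13 : c1 ≠ c3) (hc23 : c2 ≠ c3)
    (hz11 : 0 < f (i1, c1) - g (i1, c1)) (hz33 : 0 < f (i3, c3) - g (i3, c3))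
    (hz12 : f (i1, c2) - g (i1, c2) < 0) (hz31 : f (i3, c1) - g (i3, c1) < 0)
    (hzy2 : f (y, c2) = g (y, c2)) (hzy3 : f (y, c3) = g (y, c3))
    (hyv1 : (y : ℕ) ≠ (c1 : ℕ)) (hyv3 : (y : ℕ) ≠ (c3 : ℕ))
    (hfy2 : 1 ≤ f (y, c2)) :
    ∃ f₂, TValid f₂ ∧ TReach f f₂ ∧ tdist f₂ g < tdist f g := by
  have hd12 : (i1 : ℕ) ≠ (c2 : ℕ) := offdiag_of_pos hf hg (p := (i1, c2)) (by omega)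
  have hd31 : (i3 : ℕ) ≠ (c1 : ℕ) := offdiag_of_pos hf hg (p := (i3, c1)) (by omega)
  have hf11 : 1 ≤ f (i1, c1) := nonneg_one_le hg hz11
  have hf33 : 1 ≤ f (i3, c3) := nonneg_one_le hg hz33
  set M1 := basicMove i1 y c2 c1 with hM1
  set M2 := basicMove i3 y c1 c3 with hM2
  obtain ⟨hval1, hr1⟩ := treach_single hf i1 y c2 c1 hy1.symm hc12.symm hd12 hyv1 hf11 hfy2
  have m1_a : M1 (i1, c2) = 1 := bm_11 hy1.symm hc12.symm
  have m1_b : M1 (y, c1) = 1 := bm_22 hy1.symm hc12.symm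
  have m1_c : M1 (i1, c1) = -1 := bm_12 hy1.symm hc12.symm
  have m1_d : M1 (y, c2) = -1 := bm_21 hy1.symm hc12.symm
  have m1_z33 : M1 (i3, c3) = 0 :=
    bm_0 _ (ne_of_fst hi13.symm) (ne_of_fst hy3.symm) (ne_of_fst hi13.symm) (ne_of_fst hy3.symm)
  have m1_z31 : M1 (i3, c1) = 0 :=
    bm_0 _ (ne_of_fst hi13.symm) (ne_of_fst hy3.symm) (ne_of_fst hi13.symm) (ne_of_fst hy3.symm)
  have m1_zy3 : M1 (y, c3) = 0 :=
    bm_0 _ (ne_of_fst hy1) (ne_of_snd hc13.symm) (ne_of_fst hy1) (ne_of_snd hc23.symm)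
  have hf1a : 1 ≤ (f + M1) (i3, c3) := by simp only [Pi.add_apply, m1_z33]; omega
  have hf1b : 1 ≤ (f + M1) (y, c1) := by
    simp only [Pi.add_apply, m1_b]; have := hf.1 (y, c1); omega
  obtain ⟨hval2, hr2⟩ := treach_single hval1 i3 y c1 c3 hy3.symm hc13 hd31 hyv3 hf1a hf1b
  have m2_a : M2 (i3, c1) = 1 := bm_11 hy3.symm hc13
  have m2_b : M2 (y, c3) = 1 := bm_22 hy3.symm hc13
  have m2_c : M2 (i3, c3) = -1 := bm_12 hy3.symm hc13
  have m2_d : M2 (y, c1) = -1 := bm_21 hy3.symm hc13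
  have m2_z11 : M2 (i1, c1) = 0 :=
    bm_0 _ (ne_of_fst hi13) (ne_of_fst hy1.symm) (ne_of_fst hi13) (ne_of_fst hy1.symm)
  have m2_z12 : M2 (i1, c2) = 0 :=
    bm_0 _ (ne_of_fst hi13) (ne_of_fst hy1.symm) (ne_of_fst hi13) (ne_of_fst hy1.symm)
  have m2_zy2 : M2 (y, c2) = 0 :=
    bm_0 _ (ne_of_fst hy3) (ne_of_snd hc23) (ne_of_fst hy3) (ne_of_snd hc12.symm)
  refine ⟨f + M1 + M2, hval2, treach_trans hr1 hr2, ?_⟩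
  apply tdist_lt_core _ _ _
    ({(i1, c1), (i1, c2), (i3, c3), (i3, c1), (y, c2), (y, c3)} : Finset (Fin I × Fin J))
  · intro p hp
    simp only [Finset.mem_insert, Finset.mem_singleton] at hp
    push_neg at hp
    obtain ⟨q1, q2, q3, q4, q5, q6⟩ := hp
    by_cases hx : p = (y, c1)
    · subst hx
      simp only [Pi.add_apply, m1_b, m2_d]; ring
    · have e1 : M1 p = 0 := bm_0 p q2 hx q1 q5
      have e2 : M2 p = 0 := bm_0 p q4 q6 q3 hx
      simp only [Pi.add_apply, e1, e2, add_zero]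
  · rw [sum6 _ _ _ _ _ _ _ (ne_of_snd hc12) (ne_of_fst hi13) (ne_of_fst hi13)
      (ne_of_fst hy1.symm) (ne_of_fst hy1.symm) (ne_of_fst hi13) (ne_of_fst hi13)
      (ne_of_fst hy1.symm) (ne_of_fst hy1.symm) (ne_of_snd hc13.symm)
      (ne_of_fst hy3.symm) (ne_of_fst hy3.symm) (ne_of_fst hy3.symm) (ne_of_fst hy3.symm)
      (ne_of_snd hc23),
      sum6 _ _ _ _ _ _ _ (ne_of_snd hc12) (ne_of_fst hi13) (ne_of_fst hi13)
      (ne_of_fst hy1.symm) (ne_of_fst hy1.symm) (ne_of_fst hi13) (ne_of_fst hi13)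
      (ne_of_fst hy1.symm) (ne_of_fst hy1.symm) (ne_of_snd hc13.symm)
      (ne_of_fst hy3.symm) (ne_of_fst hy3.symm) (ne_of_fst hy3.symm) (ne_of_fst hy3.symm)
      (ne_of_snd hc23)]
    simp only [Pi.add_apply, m1_a, m1_b, m1_c, m1_d, m1_z33, m1_z31, m1_zy3,
      m2_a, m2_b, m2_c, m2_d, m2_z11, m2_z12, m2_zy2]
    omega


lemma stepC {f g : Fin I × Fin J → ℤ} (hf : TValid f) (hg : TValid g)
    (i1 i2 i3 y : Fin I) (c1 c2 c3 x : Fin J)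
    (hi12 : i1 ≠ i2) (hi13 : i1 ≠ i3) (hi23 : i2 ≠ i3)
    (hy1 : y ≠ i1) (hy2 : y ≠ i2) (hy3 : y ≠ i3)
    (hc12 : c1 ≠ c2) (hc13 : c1 ≠ c3) (hc23 : c2 ≠ c3)
    (hx1 : x ≠ c1) (hx2 : x ≠ c2) (hx3 : x ≠ c3)
    (hz11 : 0 < f (i1, c1) - g (i1, c1)) (hz12 : f (i1, c2) - g (i1, c2) < 0)
    (hz22 : 0 < f (i2, c2) - g (i2, c2)) (hz23 : f (i2, c3) - g (i2, c3) < 0)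
    (hz33 : 0 < f (i3, c3) - g (i3, c3)) (hz31 : f (i3, c1) - g (i3, c1) < 0)
    (hxv1 : (x : ℕ) ≠ (i1 : ℕ)) (hxv2 : (x : ℕ) ≠ (i2 : ℕ)) (hxv3 : (x : ℕ) ≠ (i3 : ℕ))
    (hyc1 : (y : ℕ) ≠ (c1 : ℕ)) (hfyx : 1 ≤ f (y, x)) :
    ∃ f₂, TValid f₂ ∧ TReach f f₂ ∧ tdist f₂ g < tdist f g := by
  have hyx : (y : ℕ) ≠ (x : ℕ) := by intro h; have := hf.2 (y, x) h; omega
  have hd12 : (i1 : ℕ) ≠ (c2 : ℕ) := offdiag_of_pos hf hg (p := (i1, c2)) (by omega)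
  have hd23 : (i2 : ℕ) ≠ (c3 : ℕ) := offdiag_of_pos hf hg (p := (i2, c3)) (by omega)
  have hd31 : (i3 : ℕ) ≠ (c1 : ℕ) := offdiag_of_pos hf hg (p := (i3, c1)) (by omega)
  have hf11 : 1 ≤ f (i1, c1) := nonneg_one_le hg hz11
  have hf22 : 1 ≤ f (i2, c2) := nonneg_one_le hg hz22
  have hf33 : 1 ≤ f (i3, c3) := nonneg_one_le hg hz33
  set M1 := basicMove i1 y x c1 with hM1
  set M2 := basicMove i1 i2 c2 x with hM2
  set M3 := basicMove i2 i3 c3 x with hM3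
  set M4 := basicMove i3 y c1 x with hM4
  -- M1 evaluations
  have m1_p1 : M1 (i1, x) = 1 := bm_11 hy1.symm hx1
  have m1_p2 : M1 (y, c1) = 1 := bm_22 hy1.symm hx1
  have m1_m1 : M1 (i1, c1) = -1 := bm_12 hy1.symm hx1
  have m1_m2 : M1 (y, x) = -1 := bm_21 hy1.symm hx1
  have m1_z22 : M1 (i2, c2) = 0 :=
    bm_0 _ (ne_of_fst hi12.symm) (ne_of_fst hy2.symm) (ne_of_fst hi12.symm) (ne_of_fst hy2.symm)
  have m1_z2x : M1 (i2, x) = 0 :=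
    bm_0 _ (ne_of_fst hi12.symm) (ne_of_fst hy2.symm) (ne_of_fst hi12.symm) (ne_of_fst hy2.symm)
  have m1_z23 : M1 (i2, c3) = 0 :=
    bm_0 _ (ne_of_fst hi12.symm) (ne_of_fst hy2.symm) (ne_of_fst hi12.symm) (ne_of_fst hy2.symm)
  have m1_z33 : M1 (i3, c3) = 0 :=
    bm_0 _ (ne_of_fst hi13.symm) (ne_of_fst hy3.symm) (ne_of_fst hi13.symm) (ne_of_fst hy3.symm)
  have m1_z3x : M1 (i3, x) = 0 :=
    bm_0 _ (ne_of_fst hi13.symm) (ne_of_fst hy3.symm) (ne_of_fst hi13.symm) (ne_of_fst hy3.symm)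
  have m1_z31 : M1 (i3, c1) = 0 :=
    bm_0 _ (ne_of_fst hi13.symm) (ne_of_fst hy3.symm) (ne_of_fst hi13.symm) (ne_of_fst hy3.symm)
  have m1_z12 : M1 (i1, c2) = 0 :=
    bm_0 _ (ne_of_snd hx2.symm) (ne_of_fst hy1.symm) (ne_of_snd hc12.symm) (ne_of_fst hy1.symm)
  -- M2 evaluations
  have m2_p1 : M2 (i1, c2) = 1 := bm_11 hi12 hx2.symm
  have m2_p2 : M2 (i2, x) = 1 := bm_22 hi12 hx2.symm
  have m2_m1 : M2 (i1, x) = -1 := bm_12 hi12 hx2.symm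
  have m2_m2 : M2 (i2, c2) = -1 := bm_21 hi12 hx2.symm
  have m2_z11 : M2 (i1, c1) = 0 :=
    bm_0 _ (ne_of_snd hc12) (ne_of_fst hi12) (ne_of_snd hx1.symm) (ne_of_fst hi12)
  have m2_z23 : M2 (i2, c3) = 0 :=
    bm_0 _ (ne_of_fst hi12.symm) (ne_of_snd hx3.symm) (ne_of_fst hi12.symm) (ne_of_snd hc23.symm)
  have m2_z33 : M2 (i3, c3) = 0 :=
    bm_0 _ (ne_of_fst hi13.symm) (ne_of_fst hi23.symm) (ne_of_fst hi13.symm) (ne_of_fst hi23.symm)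
  have m2_z3x : M2 (i3, x) = 0 :=
    bm_0 _ (ne_of_fst hi13.symm) (ne_of_fst hi23.symm) (ne_of_fst hi13.symm) (ne_of_fst hi23.symm)
  have m2_z31 : M2 (i3, c1) = 0 :=
    bm_0 _ (ne_of_fst hi13.symm) (ne_of_fst hi23.symm) (ne_of_fst hi13.symm) (ne_of_fst hi23.symm)
  have m2_zy1 : M2 (y, c1) = 0 :=
    bm_0 _ (ne_of_fst hy1) (ne_of_fst hy2) (ne_of_fst hy1) (ne_of_fst hy2)
  have m2_zyx : M2 (y, x) = 0 :=
    bm_0 _ (ne_of_fst hy1) (ne_of_fst hy2) (ne_of_fst hy1) (ne_of_fst hy2)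
  -- M3 evaluations
  have m3_p1 : M3 (i2, c3) = 1 := bm_11 hi23 hx3.symm
  have m3_p2 : M3 (i3, x) = 1 := bm_22 hi23 hx3.symm
  have m3_m1 : M3 (i2, x) = -1 := bm_12 hi23 hx3.symm
  have m3_m2 : M3 (i3, c3) = -1 := bm_21 hi23 hx3.symm
  have m3_z11 : M3 (i1, c1) = 0 :=
    bm_0 _ (ne_of_fst hi12) (ne_of_fst hi13) (ne_of_fst hi12) (ne_of_fst hi13)
  have m3_z12 : M3 (i1, c2) = 0 :=
    bm_0 _ (ne_of_fst hi12) (ne_of_fst hi13) (ne_of_fst hi12) (ne_of_fst hi13)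
  have m3_z1x : M3 (i1, x) = 0 :=
    bm_0 _ (ne_of_fst hi12) (ne_of_fst hi13) (ne_of_fst hi12) (ne_of_fst hi13)
  have m3_z22 : M3 (i2, c2) = 0 :=
    bm_0 _ (ne_of_snd hc23) (ne_of_fst hi23) (ne_of_snd hx2.symm) (ne_of_fst hi23)
  have m3_z31 : M3 (i3, c1) = 0 :=
    bm_0 _ (ne_of_fst hi23.symm) (ne_of_snd hx1.symm) (ne_of_fst hi23.symm) (ne_of_snd hc13)
  have m3_zy1 : M3 (y, c1) = 0 :=
    bm_0 _ (ne_of_fst hy2) (ne_of_fst hy3) (ne_of_fst hy2) (ne_of_fst hy3)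
  have m3_zyx : M3 (y, x) = 0 :=
    bm_0 _ (ne_of_fst hy2) (ne_of_fst hy3) (ne_of_fst hy2) (ne_of_fst hy3)
  -- M4 evaluations
  have m4_p1 : M4 (i3, c1) = 1 := bm_11 hy3.symm hx1.symm
  have m4_p2 : M4 (y, x) = 1 := bm_22 hy3.symm hx1.symm
  have m4_m1 : M4 (i3, x) = -1 := bm_12 hy3.symm hx1.symm
  have m4_m2 : M4 (y, c1) = -1 := bm_21 hy3.symm hx1.symm
  have m4_z11 : M4 (i1, c1) = 0 :=
    bm_0 _ (ne_of_fst hi13) (ne_of_fst hy1.symm) (ne_of_fst hi13) (ne_of_fst hy1.symm)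
  have m4_z12 : M4 (i1, c2) = 0 :=
    bm_0 _ (ne_of_fst hi13) (ne_of_fst hy1.symm) (ne_of_fst hi13) (ne_of_fst hy1.symm)
  have m4_z1x : M4 (i1, x) = 0 :=
    bm_0 _ (ne_of_fst hi13) (ne_of_fst hy1.symm) (ne_of_fst hi13) (ne_of_fst hy1.symm)
  have m4_z22 : M4 (i2, c2) = 0 :=
    bm_0 _ (ne_of_fst hi23) (ne_of_fst hy2.symm) (ne_of_fst hi23) (ne_of_fst hy2.symm)
  have m4_z23 : M4 (i2, c3) = 0 :=
    bm_0 _ (ne_of_fst hi23) (ne_of_fst hy2.symm) (ne_of_fst hi23) (ne_of_fst hy2.symm)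
  have m4_z2x : M4 (i2, x) = 0 :=
    bm_0 _ (ne_of_fst hi23) (ne_of_fst hy2.symm) (ne_of_fst hi23) (ne_of_fst hy2.symm)
  have m4_z33 : M4 (i3, c3) = 0 :=
    bm_0 _ (ne_of_snd hc13.symm) (ne_of_fst hy3.symm) (ne_of_snd hx3.symm) (ne_of_fst hy3.symm)
  -- the four single moves
  obtain ⟨hval1, hr1⟩ := treach_single hf i1 y x c1 hy1.symm hx1 (fun h => hxv1 h.symm)
    hyc1 hf11 hfyx
  have b2a : 1 ≤ (f + M1) (i1, x) := by
    simp only [Pi.add_apply, m1_p1]; have := hf.1 (i1, x); omega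
  have b2b : 1 ≤ (f + M1) (i2, c2) := by simp only [Pi.add_apply, m1_z22]; omega
  obtain ⟨hval2, hr2⟩ := treach_single hval1 i1 i2 c2 x hi12 hx2.symm hd12
    (fun h => hxv2 h.symm) b2a b2b
  have b3a : 1 ≤ (f + M1 + M2) (i2, x) := by
    simp only [Pi.add_apply, m1_z2x, m2_p2]; have := hf.1 (i2, x); omega
  have b3b : 1 ≤ (f + M1 + M2) (i3, c3) := by
    simp only [Pi.add_apply, m1_z33, m2_z33]; omega
  obtain ⟨hval3, hr3⟩ := treach_single hval2 i2 i3 c3 x hi23 hx3.symm hd23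
    (fun h => hxv3 h.symm) b3a b3b
  have b4a : 1 ≤ (f + M1 + M2 + M3) (i3, x) := by
    simp only [Pi.add_apply, m1_z3x, m2_z3x, m3_p2]; have := hf.1 (i3, x); omega
  have b4b : 1 ≤ (f + M1 + M2 + M3) (y, c1) := by
    simp only [Pi.add_apply, m1_p2, m2_zy1, m3_zy1]; have := hf.1 (y, c1); omega
  obtain ⟨hval4, hr4⟩ := treach_single hval3 i3 y c1 x hy3.symm hx1.symm hd31 hyx b4a b4b
  refine ⟨f + M1 + M2 + M3 + M4, hval4,
    treach_trans hr1 (treach_trans hr2 (treach_trans hr3 hr4)), ?_⟩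
  apply tdist_lt_core _ _ _
    ({(i1, c1), (i1, c2), (i2, c2), (i2, c3), (i3, c3), (i3, c1)} : Finset (Fin I × Fin J))
  · intro p hp
    simp only [Finset.mem_insert, Finset.mem_singleton] at hp
    push_neg at hp
    obtain ⟨q1, q2, q3, q4, q5, q6⟩ := hp
    by_cases ha1 : p = (i1, x)
    · subst ha1; simp only [Pi.add_apply, m1_p1, m2_m1, m3_z1x, m4_z1x]; ring
    · by_cases ha2 : p = (i2, x)
      · subst ha2; simp only [Pi.add_apply, m1_z2x, m2_p2, m3_m1, m4_z2x]; ring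
      · by_cases ha3 : p = (i3, x)
        · subst ha3; simp only [Pi.add_apply, m1_z3x, m2_z3x, m3_p2, m4_m1]; ring
        · by_cases ha4 : p = (y, c1)
          · subst ha4; simp only [Pi.add_apply, m1_p2, m2_zy1, m3_zy1, m4_m2]; ring
          · by_cases ha5 : p = (y, x)
            · subst ha5; simp only [Pi.add_apply, m1_m2, m2_zyx, m3_zyx, m4_p2]; ring
            · have e1 : M1 p = 0 := bm_0 p ha1 ha4 q1 ha5
              have e2 : M2 p = 0 := bm_0 p q2 ha2 ha1 q3
              have e3 : M3 p = 0 := bm_0 p q4 ha3 ha2 q5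
              have e4 : M4 p = 0 := bm_0 p q6 ha5 ha3 ha4
              simp only [Pi.add_apply, e1, e2, e3, e4, add_zero]
  · rw [sum6 _ _ _ _ _ _ _ (ne_of_snd hc12) (ne_of_fst hi12) (ne_of_fst hi12)
      (ne_of_fst hi13) (ne_of_fst hi13) (ne_of_fst hi12) (ne_of_fst hi12)
      (ne_of_fst hi13) (ne_of_fst hi13) (ne_of_snd hc23) (ne_of_fst hi23)
      (ne_of_fst hi23) (ne_of_fst hi23) (ne_of_fst hi23) (ne_of_snd hc13.symm),
      sum6 _ _ _ _ _ _ _ (ne_of_snd hc12) (ne_of_fst hi12) (ne_of_fst hi12)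
      (ne_of_fst hi13) (ne_of_fst hi13) (ne_of_fst hi12) (ne_of_fst hi12)
      (ne_of_fst hi13) (ne_of_fst hi13) (ne_of_snd hc23) (ne_of_fst hi23)
      (ne_of_fst hi23) (ne_of_fst hi23) (ne_of_fst hi23) (ne_of_snd hc13.symm)]
    simp only [Pi.add_apply, m1_m1, m1_z12, m1_z22, m1_z23, m1_z33, m1_z31,
      m2_z11, m2_p1, m2_m2, m2_z23, m2_z33, m2_z31,
      m3_z11, m3_z12, m3_z22, m3_p1, m3_m2, m3_z31,
      m4_z11, m4_z12, m4_z22, m4_z23, m4_z33, m4_p1]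
    omega


lemma step (hI : 4 ≤ I) {f g : Fin I × Fin J → ℤ} (hf : TValid f) (hg : TValid g)
    (hrow : ∀ i, ∑ j, f (i, j) = ∑ j, g (i, j))
    (hcol : ∀ j, ∑ i, f (i, j) = ∑ i, g (i, j))
    (hpos : ∀ i, 0 < ∑ j, f (i, j))
    (hne : f ≠ g) :
    (∃ f₂, TValid f₂ ∧ TReach f f₂ ∧ tdist f₂ g < tdist f g) ∨
    (∃ g₂, TValid g₂ ∧ TReach g g₂ ∧ tdist f g₂ < tdist f g) := by
  have hzrow : ∀ i, ∑ j, (f (i, j) - g (i, j)) = 0 := fun i => by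
    rw [Finset.sum_sub_distrib, hrow i]; ring
  have hzcol : ∀ j, ∑ i, (f (i, j) - g (i, j)) = 0 := fun j => by
    rw [Finset.sum_sub_distrib, hcol j]; ring
  by_cases hE1 : ∃ (i r : Fin I) (e c : Fin J), 0 < f (i, e) - g (i, e) ∧
      f (i, c) - g (i, c) < 0 ∧ 0 < f (r, c) - g (r, c) ∧ (r : ℕ) ≠ (e : ℕ)
  · obtain ⟨i, r, e, c, ha, hb, hc, hd⟩ := hE1
    exact Or.inl (stepE1 hf hg i r e c ha hb hc hd)
  by_cases hE2 : ∃ (i r : Fin I) (e c : Fin J), 0 < g (i, e) - f (i, e) ∧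
      g (i, c) - f (i, c) < 0 ∧ 0 < g (r, c) - f (r, c) ∧ (r : ℕ) ≠ (e : ℕ)
  · obtain ⟨i, r, e, c, ha, hb, hc, hd⟩ := hE2
    obtain ⟨g₂, hv, hr, hlt⟩ := stepE1 hg hf i r e c ha hb hc hd
    refine Or.inr ⟨g₂, hv, hr, ?_⟩
    rw [tdist_comm f g₂, tdist_comm f g]
    exact hlt
  push_neg at hE1 hE2
  -- hE1 : ∀ i r e c, ... → (r:ℕ) = (e:ℕ)  (call it hU)
  -- find an excess cell
  have hex : ∃ (i1 : Fin I) (c1 : Fin J), 0 < f (i1, c1) - g (i1, c1) := by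
    have h0 : ∃ p : Fin I × Fin J, f p ≠ g p := by
      by_contra h; push_neg at h; exact hne (funext h)
    obtain ⟨p0, hp0⟩ := h0
    rcases lt_trichotomy (f p0 - g p0) 0 with h | h | h
    · obtain ⟨e, he⟩ := ex_pos_of_sum_zero (hzrow p0.1) (k0 := p0.2) (by
        simpa using h)
      exact ⟨p0.1, e, he⟩
    · exact absurd (by omega) hp0
    · exact ⟨p0.1, p0.2, by simpa using h⟩
  obtain ⟨i1, c1, hz11⟩ := hex
  obtain ⟨c2, hz12⟩ := ex_neg_of_sum_zero (hzrow i1) hz11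
  obtain ⟨i2, hz22⟩ := ex_pos_of_sum_zero (hzcol c2) hz12
  obtain ⟨c3, hz23⟩ := ex_neg_of_sum_zero (hzrow i2) hz22
  obtain ⟨i3, hz33⟩ := ex_pos_of_sum_zero (hzcol c3) hz23
  obtain ⟨c4, hz34⟩ := ex_neg_of_sum_zero (hzrow i3) hz33
  have v21 : (i2 : ℕ) = (c1 : ℕ) := hE1 i1 i2 c1 c2 hz11 hz12 hz22
  have v32 : (i3 : ℕ) = (c2 : ℕ) := hE1 i2 i3 c2 c3 hz22 hz23 hz33
  have v13 : (i1 : ℕ) = (c3 : ℕ) :=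
    hE2 i2 i1 c3 c2 (by omega) (by omega) (by omega)
  have v24 : (i2 : ℕ) = (c4 : ℕ) :=
    hE2 i3 i2 c4 c3 (by omega) (by omega) (by omega)
  have hc41 : c4 = c1 := Fin.val_injective (by omega)
  subst hc41
  have hz31 : f (i3, c4) - g (i3, c4) < 0 := hz34
  clear hz34
  -- distinctness
  have hi12 : i1 ≠ i2 := by rintro rfl; omega
  have hi23 : i2 ≠ i3 := by rintro rfl; omega
  have hd12 : (i1 : ℕ) ≠ (c2 : ℕ) := offdiag_of_pos hf hg (p := (i1, c2)) (by omega)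
  have hd23 : (i2 : ℕ) ≠ (c3 : ℕ) := offdiag_of_pos hf hg (p := (i2, c3)) (by omega)
  have hd31 : (i3 : ℕ) ≠ (c4 : ℕ) := offdiag_of_pos hf hg (p := (i3, c4)) (by omega)
  have hi13 : i1 ≠ i3 := by intro h; rw [h] at hd12; omega
  have hc12 : c4 ≠ c2 := by rintro rfl; omega
  have hc23 : c2 ≠ c3 := by rintro rfl; omega
  have hc13 : c4 ≠ c3 := by
    intro h; rw [h] at v21
    exact hi12 (Fin.val_injective (by omega))
  -- support lemmas
  have hr1 : ∀ x, x ≠ c4 → x ≠ c2 → f (i1, x) = g (i1, x) := by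
    intro x hx1 hx2
    rcases lt_trichotomy (f (i1, x) - g (i1, x)) 0 with h | h | h
    · have hv := hE2 i1 i3 x c4 (by omega) (by omega) (by omega)
      exact absurd (Fin.val_injective (show (x : ℕ) = (c2 : ℕ) by omega)) hx2
    · omega
    · have hv := hE1 i1 i2 x c2 h hz12 hz22
      exact absurd (Fin.val_injective (show (x : ℕ) = (c4 : ℕ) by omega)) hx1
  have hr2 : ∀ x, x ≠ c2 → x ≠ c3 → f (i2, x) = g (i2, x) := by
    intro x hx2 hx3
    rcases lt_trichotomy (f (i2, x) - g (i2, x)) 0 with h | h | h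
    · have hv := hE2 i2 i1 x c2 (by omega) (by omega) (by omega)
      exact absurd (Fin.val_injective (show (x : ℕ) = (c3 : ℕ) by omega)) hx3
    · omega
    · have hv := hE1 i2 i3 x c3 h hz23 hz33
      exact absurd (Fin.val_injective (show (x : ℕ) = (c2 : ℕ) by omega)) hx2
  have hr3 : ∀ x, x ≠ c3 → x ≠ c4 → f (i3, x) = g (i3, x) := by
    intro x hx3 hx1
    rcases lt_trichotomy (f (i3, x) - g (i3, x)) 0 with h | h | h
    · have hv := hE2 i3 i2 x c3 (by omega) (by omega) (by omega)
      exact absurd (Fin.val_injective (show (x : ℕ) = (c4 : ℕ) by omega)) hx1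
    · omega
    · have hv := hE1 i3 i1 x c4 h hz31 hz11
      exact absurd (Fin.val_injective (show (x : ℕ) = (c3 : ℕ) by omega)) hx3
  have hcc1 : ∀ w : Fin I, w ≠ i1 → w ≠ i3 → f (w, c4) = g (w, c4) := by
    intro w hw1 hw3
    rcases lt_trichotomy (f (w, c4) - g (w, c4)) 0 with h | h | h
    · have hv := hE2 i1 w c2 c4 (by omega) (by omega) (by omega)
      exact absurd (Fin.val_injective (show (w : ℕ) = (i3 : ℕ) by omega)) hw3
    · omega
    · have hv := hE1 i3 w c3 c4 hz33 hz31 h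
      exact absurd (Fin.val_injective (show (w : ℕ) = (i1 : ℕ) by omega)) hw1
  have hcc2 : ∀ w : Fin I, w ≠ i2 → w ≠ i1 → f (w, c2) = g (w, c2) := by
    intro w hw2 hw1
    rcases lt_trichotomy (f (w, c2) - g (w, c2)) 0 with h | h | h
    · have hv := hE2 i2 w c3 c2 (by omega) (by omega) (by omega)
      exact absurd (Fin.val_injective (show (w : ℕ) = (i1 : ℕ) by omega)) hw1
    · omega
    · have hv := hE1 i1 w c4 c2 hz11 hz12 h
      exact absurd (Fin.val_injective (show (w : ℕ) = (i2 : ℕ) by omega)) hw2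
  have hcc3 : ∀ w : Fin I, w ≠ i3 → w ≠ i2 → f (w, c3) = g (w, c3) := by
    intro w hw3 hw2
    rcases lt_trichotomy (f (w, c3) - g (w, c3)) 0 with h | h | h
    · have hv := hE2 i3 w c4 c3 (by omega) (by omega) (by omega)
      exact absurd (Fin.val_injective (show (w : ℕ) = (i2 : ℕ) by omega)) hw2
    · omega
    · have hv := hE1 i2 w c2 c3 hz22 hz23 h
      exact absurd (Fin.val_injective (show (w : ℕ) = (i3 : ℕ) by omega)) hw3
  -- case B at the three columns
  by_cases hB2 : ∃ w : Fin I, w ≠ i1 ∧ w ≠ i2 ∧ w ≠ i3 ∧ 1 ≤ f (w, c2)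
  · obtain ⟨w, b1, b2, b3, b4⟩ := hB2
    refine Or.inl (stepB hf hg i1 i3 w c4 c2 c3 hi13 b1 b3 hc12 hc13 hc23 hz11 hz33 hz12
      hz31 (hcc2 w b2 b1) (hcc3 w b3 b2) ?_ ?_ b4)
    · intro h; exact b2 (Fin.val_injective (by omega))
    · intro h; exact b1 (Fin.val_injective (by omega))
  by_cases hB3 : ∃ w : Fin I, w ≠ i1 ∧ w ≠ i2 ∧ w ≠ i3 ∧ 1 ≤ f (w, c3)
  · obtain ⟨w, b1, b2, b3, b4⟩ := hB3
    refine Or.inl (stepB hf hg i2 i1 w c2 c3 c4 hi12.symm b2 b1 hc23 hc12.symm hc13.symm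
      hz22 hz11 hz23 hz12 (hcc3 w b3 b2) (hcc1 w b1 b3) ?_ ?_ b4)
    · intro h; exact b3 (Fin.val_injective (by omega))
    · intro h; exact b2 (Fin.val_injective (by omega))
  by_cases hB1 : ∃ w : Fin I, w ≠ i1 ∧ w ≠ i2 ∧ w ≠ i3 ∧ 1 ≤ f (w, c4)
  · obtain ⟨w, b1, b2, b3, b4⟩ := hB1
    refine Or.inl (stepB hf hg i3 i2 w c3 c4 c2 hi23.symm b3 b2 hc13.symm hc23.symm hc12
      hz33 hz22 hz31 hz23 (hcc1 w b1 b3) (hcc2 w b2 b1) ?_ ?_ b4)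
    · intro h; exact b1 (Fin.val_injective (by omega))
    · intro h; exact b3 (Fin.val_injective (by omega))
  -- case C
  push_neg at hB1 hB2 hB3
  have hcard : ∃ y : Fin I, y ∉ ({i1, i2, i3} : Finset (Fin I)) := by
    by_contra hcon
    push_neg at hcon
    have hsub : (Finset.univ : Finset (Fin I)) ⊆ {i1, i2, i3} := fun w _ => hcon w
    have h1 := Finset.card_le_card hsub
    have h2 : ({i1, i2, i3} : Finset (Fin I)).card ≤ 3 := by
      have a1 := Finset.card_insert_le i1 ({i2, i3} : Finset (Fin I))
      have a2 := Finset.card_insert_le i2 ({i3} : Finset (Fin I))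
      simp only [Finset.card_singleton] at a2
      omega
    rw [Finset.card_univ, Fintype.card_fin] at h1
    omega
  obtain ⟨y, hy⟩ := hcard
  simp only [Finset.mem_insert, Finset.mem_singleton, not_or] at hy
  obtain ⟨hy1, hy2, hy3⟩ := hy
  obtain ⟨x, hxpos⟩ : ∃ x, 0 < f (y, x) := ex_pos_of_sum_pos (hpos y)
  have hx1 : x ≠ c4 := by rintro rfl; have := hB1 y hy1 hy2 hy3; omega
  have hx2 : x ≠ c2 := by rintro rfl; have := hB2 y hy1 hy2 hy3; omega
  have hx3 : x ≠ c3 := by rintro rfl; have := hB3 y hy1 hy2 hy3; omega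
  have hxv1 : (x : ℕ) ≠ (i1 : ℕ) := fun h => hx3 (Fin.val_injective (by omega))
  have hxv2 : (x : ℕ) ≠ (i2 : ℕ) := fun h => hx1 (Fin.val_injective (by omega))
  have hxv3 : (x : ℕ) ≠ (i3 : ℕ) := fun h => hx2 (Fin.val_injective (by omega))
  have hyc1 : (y : ℕ) ≠ (c4 : ℕ) := fun h => hy2 (Fin.val_injective (by omega))
  exact Or.inl (stepC hf hg i1 i2 i3 y c4 c2 c3 x hi12 hi13 hi23 hy1 hy2 hy3 hc12 hc13
    hc23 hx1 hx2 hx3 hz11 hz12 hz22 hz23 hz33 hz31 hxv1 hxv2 hxv3 hyc1 (by omega))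


lemma key (hI : 4 ≤ I) : ∀ (D : ℕ) (f g : Fin I × Fin J → ℤ), TValid f → TValid g →
    (∀ i, ∑ j, f (i, j) = ∑ j, g (i, j)) → (∀ j, ∑ i, f (i, j) = ∑ i, g (i, j)) →
    (∀ i, 0 < ∑ j, f (i, j)) → tdist f g ≤ D → TReach f g := by
  intro D
  induction D with
  | zero =>
    intro f g hf hg _ _ _ hd
    have h0 : tdist f g = 0 := Nat.le_antisymm hd (Nat.zero_le _)
    rw [tdist_eq_zero h0]
    exact treach_refl hg
  | succ D ih =>
    intro f g hf hg hrow hcol hpos hd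
    by_cases hfg : f = g
    · rw [hfg]; exact treach_refl hg
    rcases step hI hf hg hrow hcol hpos hfg with ⟨f₂, hv2, hr2, hlt⟩ | ⟨g₂, hv2, hr2, hlt⟩
    · have hrow2 : ∀ i, ∑ j, f₂ (i, j) = ∑ j, g (i, j) :=
        fun i => (treach_rowsum hr2 i).symm.trans (hrow i)
      have hcol2 : ∀ j, ∑ i, f₂ (i, j) = ∑ i, g (i, j) :=
        fun j => (treach_colsum hr2 j).symm.trans (hcol j)
      have hpos2 : ∀ i, 0 < ∑ j, f₂ (i, j) := fun i => by
        rw [← treach_rowsum hr2 i]; exact hpos i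
      exact treach_trans hr2 (ih f₂ g hv2 hg hrow2 hcol2 hpos2 (by omega))
    · have hrow2 : ∀ i, ∑ j, f (i, j) = ∑ j, g₂ (i, j) :=
        fun i => (hrow i).trans (treach_rowsum hr2 i)
      have hcol2 : ∀ j, ∑ i, f (i, j) = ∑ i, g₂ (i, j) :=
        fun j => (hcol j).trans (treach_colsum hr2 j)
      exact treach_trans (ih f g₂ hf hv2 hrow2 hcol2 hpos (by omega)) (treach_symm hr2)

end ConnDiag

theorem connected_diagonal_zeros {I J : ℕ} (hI : 4 ≤ I) (hJ : 4 ≤ J)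
    (n n' : Fin I × Fin J → ℕ)
    (hd : ∀ p : Fin I × Fin J, (p.1 : ℕ) = (p.2 : ℕ) → n p = 0)
    (hd' : ∀ p : Fin I × Fin J, (p.1 : ℕ) = (p.2 : ℕ) → n' p = 0)
    (hrowpos : ∀ i : Fin I, 0 < ∑ j, n (i, j))
    (hcolpos : ∀ j : Fin J, 0 < ∑ i, n (i, j))
    (hrow : ∀ i : Fin I, ∑ j, n (i, j) = ∑ j, n' (i, j))
    (hcol : ∀ j : Fin J, ∑ i, n (i, j) = ∑ i, n' (i, j)) :
    ∃ L : List (Fin I × Fin J → ℤ),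
      (∀ m ∈ L, ∃ (i1 i2 : Fin I) (j1 j2 : Fin J), i1 ≠ i2 ∧ j1 ≠ j2 ∧
        (m = basicMove i1 i2 j1 j2 ∨ m = -basicMove i1 i2 j1 j2)) ∧
      ((fun p => (n p : ℤ)) + L.sum = fun p => (n' p : ℤ)) ∧
      (∀ k : ℕ, ∀ p : Fin I × Fin J,
        0 ≤ (n p : ℤ) + (L.take k).sum p ∧
        ((p.1 : ℕ) = (p.2 : ℕ) → (n p : ℤ) + (L.take k).sum p = 0)) := by
  set f : Fin I × Fin J → ℤ := fun p => (n p : ℤ) with hfdef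
  set g : Fin I × Fin J → ℤ := fun p => (n' p : ℤ) with hgdef
  have hf : ConnDiag.TValid f := by
    constructor
    · intro p; exact Int.natCast_nonneg _
    · intro p hp; simp only [hfdef]; exact_mod_cast hd p hp
  have hg : ConnDiag.TValid g := by
    constructor
    · intro p; exact Int.natCast_nonneg _
    · intro p hp; simp only [hgdef]; exact_mod_cast hd' p hp
  have hrowz : ∀ i, ∑ j, f (i, j) = ∑ j, g (i, j) := by
    intro i; simp only [hfdef, hgdef]; exact_mod_cast hrow i
  have hcolz : ∀ j, ∑ i, f (i, j) = ∑ i, g (i, j) := by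
    intro j; simp only [hfdef, hgdef]; exact_mod_cast hcol j
  have hposz : ∀ i, 0 < ∑ j, f (i, j) := by
    intro i; simp only [hfdef]; exact_mod_cast hrowpos i
  obtain ⟨L, h1, h2, h3⟩ :=
    ConnDiag.key hI (ConnDiag.tdist f g) f g hf hg hrowz hcolz hposz (le_refl _)
  exact ⟨L, h1, h2, h3⟩
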